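/- arXiv:0706.0073 — 9 statements merged into one kernel-verified Lean document; each statement's English description precedes it below -/
import Mathlib

section
/- In the first-order polynomial DLM, for distinct sites i ≠ j: (i) for every time t ≥ 1 the same-time correlation is Cor(y_{it}, y_{jt}) = (σβ² + t·σδ² + σε²·exp(−d_{ij}/λ)) / (σβ² + t·σδ² + σε²), and (ii) for all distinct times s ≠ t the cross-time correlation is Cor(y_{it}, y_{js}) = (σβ² + min{t,s}·σδ²) / (√(σβ² + t·σδ² + σε²) · √(σβ² + s·σδ² + σε²)). -/
open MeasureTheory Filter

/-- Covariance of two real random variables: `Cov(X,Y) = E[XY] - E[X]E[Y]`. -/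
noncomputable def cov {Ω : Type*} [MeasurableSpace Ω] (μ : Measure Ω) (X Y : Ω → ℝ) : ℝ :=
  (∫ ω, X ω * Y ω ∂μ) - (∫ ω, X ω ∂μ) * (∫ ω, Y ω ∂μ)

/-- Correlation of two real random variables. -/
noncomputable def corr {Ω : Type*} [MeasurableSpace Ω] (μ : Measure Ω) (X Y : Ω → ℝ) : ℝ :=
  cov μ X Y / (Real.sqrt (cov μ X X) * Real.sqrt (cov μ Y Y))

section aux
variable {Ω : Type*} [MeasurableSpace Ω] {μ : Measure Ω}

lemma integrable_mul_L2 {X Y : Ω → ℝ} (hX : MemLp X 2 μ) (hY : MemLp Y 2 μ) :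
    Integrable (fun ω => X ω * Y ω) μ := by
  have h1 := (hX.add hY).integrable_sq
  have h2 := hX.integrable_sq
  have h3 := hY.integrable_sq
  have heq : (fun ω => X ω * Y ω) = fun ω => (((X + Y) ω) ^ 2 - X ω ^ 2 - Y ω ^ 2) / 2 := by
    funext ω; simp [Pi.add_apply]; ring
  rw [heq]
  exact ((h1.sub h2).sub h3).div_const 2

lemma cov_comm (X Y : Ω → ℝ) : cov μ X Y = cov μ Y X := by
  unfold cov
  rw [mul_comm (∫ ω, X ω ∂μ)]
  congr 1
  exact integral_congr_ae (Filter.Eventually.of_forall fun ω => mul_comm _ _)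

variable [IsProbabilityMeasure μ]

lemma cov_add_left {X X' Y : Ω → ℝ} (hX : MemLp X 2 μ) (hX' : MemLp X' 2 μ)
    (hY : MemLp Y 2 μ) :
    cov μ (fun ω => X ω + X' ω) Y = cov μ X Y + cov μ X' Y := by
  unfold cov
  rw [integral_add (hX.integrable one_le_two) (hX'.integrable one_le_two)]
  have h : ∫ ω, (X ω + X' ω) * Y ω ∂μ
      = (∫ ω, X ω * Y ω ∂μ) + ∫ ω, X' ω * Y ω ∂μ := by
    simp_rw [add_mul]
    exact integral_add (integrable_mul_L2 hX hY) (integrable_mul_L2 hX' hY)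
  rw [h]; ring

lemma cov_add_right {X Y Y' : Ω → ℝ} (hX : MemLp X 2 μ) (hY : MemLp Y 2 μ)
    (hY' : MemLp Y' 2 μ) :
    cov μ X (fun ω => Y ω + Y' ω) = cov μ X Y + cov μ X Y' := by
  rw [cov_comm, cov_add_left hY hY' hX, cov_comm X Y, cov_comm X Y']

lemma cov_sum_left {ι : Type*} (s : Finset ι) {f : ι → Ω → ℝ} {Y : Ω → ℝ}
    (hf : ∀ k ∈ s, MemLp (f k) 2 μ) (hY : MemLp Y 2 μ) :
    cov μ (fun ω => ∑ k ∈ s, f k ω) Y = ∑ k ∈ s, cov μ (f k) Y := by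
  unfold cov
  rw [integral_finset_sum _ (fun k hk => (hf k hk).integrable one_le_two)]
  have h : ∫ ω, (∑ k ∈ s, f k ω) * Y ω ∂μ = ∑ k ∈ s, ∫ ω, f k ω * Y ω ∂μ := by
    simp_rw [Finset.sum_mul]
    exact integral_finset_sum _ (fun k hk => integrable_mul_L2 (hf k hk) hY)
  rw [h, Finset.sum_mul, ← Finset.sum_sub_distrib]

lemma cov_sum_right {ι : Type*} (s : Finset ι) {X : Ω → ℝ} {f : ι → Ω → ℝ}
    (hX : MemLp X 2 μ) (hf : ∀ k ∈ s, MemLp (f k) 2 μ) :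
    cov μ X (fun ω => ∑ k ∈ s, f k ω) = ∑ k ∈ s, cov μ X (f k) := by
  rw [cov_comm, cov_sum_left s hf hX]
  exact Finset.sum_congr rfl fun k _ => cov_comm _ _

end aux

/-- In the first-order polynomial DLM, for distinct sites `i ≠ j`:
(i) the same-time correlation is
`Cor(y_{it}, y_{jt}) = (σβ² + t·σδ² + σε²·exp(−d_{ij}/λ)) / (σβ² + t·σδ² + σε²)`; and
(ii) for distinct times `s ≠ t`, the cross-time correlation is
`Cor(y_{it}, y_{js}) = (σβ² + min{t,s}·σδ²) / (√(σβ² + t·σδ² + σε²)·√(σβ² + s·σδ² + σε²))`. -/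
theorem correlation_formulas
    {Ω : Type*} [MeasurableSpace Ω] (μ : Measure Ω) [IsProbabilityMeasure μ]
    (n : ℕ) (sb2 sd2 se2 lam : ℝ)
    (hb : 0 < sb2) (hd : 0 < sd2) (he : 0 < se2) (hl : 0 < lam)
    (β0 : Ω → ℝ) (δ : ℕ → Ω → ℝ) (ε : Fin (n + 1) → ℕ → Ω → ℝ)
    (d : Fin (n + 1) → Fin (n + 1) → ℝ)
    (hdsymm : ∀ i j, d i j = d j i) (hdnonneg : ∀ i j, 0 ≤ d i j)
    (hddiag : ∀ i, d i i = 0)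
    (hβL2 : MemLp β0 2 μ) (hδL2 : ∀ k, MemLp (δ k) 2 μ)
    (hεL2 : ∀ i t, MemLp (ε i t) 2 μ)
    (hβmean : (∫ ω, β0 ω ∂μ) = 0) (hδmean : ∀ k, (∫ ω, δ k ω ∂μ) = 0)
    (hεmean : ∀ i t, (∫ ω, ε i t ω ∂μ) = 0)
    (hβvar : cov μ β0 β0 = sb2)
    (hδvar : ∀ k, cov μ (δ k) (δ k) = sd2)
    (hεcov : ∀ i j t, cov μ (ε i t) (ε j t) = se2 * Real.exp (-(d i j) / lam))
    (hβδ : ∀ k, cov μ β0 (δ k) = 0)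
    (hδδ : ∀ k l, k ≠ l → cov μ (δ k) (δ l) = 0)
    (hβε : ∀ i t, cov μ β0 (ε i t) = 0)
    (hδε : ∀ k i t, cov μ (δ k) (ε i t) = 0)
    (hεε : ∀ i j t s, t ≠ s → cov μ (ε i t) (ε j s) = 0)
    (y : Fin (n + 1) → ℕ → Ω → ℝ)
    (hy : ∀ i t ω, y i t ω = β0 ω + (∑ k ∈ Finset.Icc 1 t, δ k ω) + ε i t ω) :
    (∀ (i j : Fin (n + 1)), i ≠ j → ∀ (t : ℕ), 1 ≤ t →
      corr μ (y i t) (y j t) =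
        (sb2 + (t : ℝ) * sd2 + se2 * Real.exp (-(d i j) / lam)) /
          (sb2 + (t : ℝ) * sd2 + se2)) ∧
    (∀ (i j : Fin (n + 1)), i ≠ j → ∀ (t s : ℕ), 1 ≤ t → 1 ≤ s → s ≠ t →
      corr μ (y i t) (y j s) =
        (sb2 + (min t s : ℝ) * sd2) /
          (Real.sqrt (sb2 + (t : ℝ) * sd2 + se2) *
            Real.sqrt (sb2 + (s : ℝ) * sd2 + se2))) := by
  have hSL2 : ∀ t : ℕ, MemLp (fun ω => ∑ k ∈ Finset.Icc 1 t, δ k ω) 2 μ :=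
    fun t => memLp_finset_sum (Finset.Icc 1 t) (fun k _ => hδL2 k)
  have hyL2 : ∀ (i : Fin (n + 1)) (t : ℕ), MemLp (y i t) 2 μ := by
    intro i t
    rw [show y i t = fun ω => β0 ω + ∑ k ∈ Finset.Icc 1 t, δ k ω + ε i t ω from
      funext (hy i t)]
    exact (hβL2.add (hSL2 t)).add (hεL2 i t)
  have splitR : ∀ (X : Ω → ℝ), MemLp X 2 μ → ∀ (j : Fin (n + 1)) (s : ℕ),
      cov μ X (y j s) = cov μ X β0 + cov μ X (fun ω => ∑ k ∈ Finset.Icc 1 s, δ k ω)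
        + cov μ X (ε j s) := by
    intro X hX j s
    calc cov μ X (y j s)
        = cov μ X (fun ω => (β0 ω + ∑ k ∈ Finset.Icc 1 s, δ k ω) + ε j s ω) := by
          rw [show y j s = fun ω => β0 ω + ∑ k ∈ Finset.Icc 1 s, δ k ω + ε j s ω from
            funext (hy j s)]
      _ = cov μ X (fun ω => β0 ω + ∑ k ∈ Finset.Icc 1 s, δ k ω) + cov μ X (ε j s) :=
          cov_add_right hX (hβL2.add (hSL2 s)) (hεL2 j s)
      _ = (cov μ X β0 + cov μ X (fun ω => ∑ k ∈ Finset.Icc 1 s, δ k ω)) + cov μ X (ε j s) :=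
          congrArg (· + cov μ X (ε j s)) (cov_add_right hX hβL2 (hSL2 s))
  have splitL : ∀ (Y : Ω → ℝ), MemLp Y 2 μ → ∀ (i : Fin (n + 1)) (t : ℕ),
      cov μ (y i t) Y = cov μ β0 Y + cov μ (fun ω => ∑ k ∈ Finset.Icc 1 t, δ k ω) Y
        + cov μ (ε i t) Y := by
    intro Y hY i t
    calc cov μ (y i t) Y
        = cov μ (fun ω => (β0 ω + ∑ k ∈ Finset.Icc 1 t, δ k ω) + ε i t ω) Y := by
          rw [show y i t = fun ω => β0 ω + ∑ k ∈ Finset.Icc 1 t, δ k ω + ε i t ω from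
            funext (hy i t)]
      _ = cov μ (fun ω => β0 ω + ∑ k ∈ Finset.Icc 1 t, δ k ω) Y + cov μ (ε i t) Y :=
          cov_add_left (hβL2.add (hSL2 t)) (hεL2 i t) hY
      _ = (cov μ β0 Y + cov μ (fun ω => ∑ k ∈ Finset.Icc 1 t, δ k ω) Y) + cov μ (ε i t) Y :=
          congrArg (· + cov μ (ε i t) Y) (cov_add_left hβL2 (hSL2 t) hY)
  have key : ∀ (i j : Fin (n + 1)) (t s : ℕ),
      cov μ (y i t) (y j s) = sb2 + ((min t s : ℕ) : ℝ) * sd2 +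
        (if t = s then se2 * Real.exp (-(d i j) / lam) else 0) := by
    intro i j t s
    rw [splitL (y j s) (hyL2 j s) i t, splitR β0 hβL2 j s,
        splitR _ (hSL2 t) j s, splitR _ (hεL2 i t) j s]
    have h1 : cov μ β0 (fun ω => ∑ k ∈ Finset.Icc 1 s, δ k ω) = 0 := by
      rw [cov_sum_right _ hβL2 (fun k _ => hδL2 k)]
      exact Finset.sum_eq_zero fun k _ => hβδ k
    have h2 : cov μ β0 (ε j s) = 0 := hβε j s
    have h3 : cov μ (fun ω => ∑ k ∈ Finset.Icc 1 t, δ k ω) β0 = 0 := by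
      rw [cov_comm, cov_sum_right _ hβL2 (fun k _ => hδL2 k)]
      exact Finset.sum_eq_zero fun k _ => hβδ k
    have h4 : cov μ (fun ω => ∑ k ∈ Finset.Icc 1 t, δ k ω)
        (fun ω => ∑ k ∈ Finset.Icc 1 s, δ k ω) = ((min t s : ℕ) : ℝ) * sd2 := by
      rw [cov_sum_left _ (fun k _ => hδL2 k) (hSL2 s)]
      have hterm : ∀ k ∈ Finset.Icc 1 t,
          cov μ (δ k) (fun ω => ∑ l ∈ Finset.Icc 1 s, δ l ω)
            = if k ∈ Finset.Icc 1 s then sd2 else 0 := by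
        intro k _
        rw [cov_sum_right _ (hδL2 k) (fun l _ => hδL2 l)]
        have hc : ∀ l ∈ Finset.Icc 1 s, cov μ (δ k) (δ l)
            = if l = k then sd2 else 0 := by
          intro l _
          by_cases hlk : l = k
          · subst hlk; simp [hδvar l]
          · simp [hlk, hδδ k l fun h => hlk h.symm]
        rw [Finset.sum_congr rfl hc, Finset.sum_ite_eq' (Finset.Icc 1 s) k fun _ => sd2]
      rw [Finset.sum_congr rfl hterm]
      have hI : Finset.Icc 1 t ∩ Finset.Icc 1 s = Finset.Icc 1 (min t s) := by
        ext x; simp [Finset.mem_inter, Finset.mem_Icc]; omega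
      rw [Finset.sum_ite_mem, hI, Finset.sum_const, Nat.card_Icc]
      simp [mul_comm]
    have h5 : cov μ (fun ω => ∑ k ∈ Finset.Icc 1 t, δ k ω) (ε j s) = 0 := by
      rw [cov_sum_left _ (fun k _ => hδL2 k) (hεL2 j s)]
      exact Finset.sum_eq_zero fun k _ => hδε k j s
    have h6 : cov μ (ε i t) β0 = 0 := by rw [cov_comm]; exact hβε i t
    have h7 : cov μ (ε i t) (fun ω => ∑ k ∈ Finset.Icc 1 s, δ k ω) = 0 := by
      rw [cov_sum_right _ (hεL2 i t) (fun k _ => hδL2 k)]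
      exact Finset.sum_eq_zero fun k _ => by rw [cov_comm]; exact hδε k i t
    have h8 : cov μ (ε i t) (ε j s)
        = if t = s then se2 * Real.exp (-(d i j) / lam) else 0 := by
      by_cases h : t = s
      · subst h; simp [hεcov i j t]
      · simp [h, hεε i j t s h]
    rw [h1, h2, h3, h4, h5, h6, h7, h8, hβvar]
    ring
  have hV : ∀ (i : Fin (n + 1)) (t : ℕ),
      cov μ (y i t) (y i t) = sb2 + (t : ℝ) * sd2 + se2 := by
    intro i t
    rw [key i i t t]
    simp [hddiag i]
  constructor
  · intro i j hij t ht
    have hVpos : 0 < sb2 + (t : ℝ) * sd2 + se2 := by positivity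
    unfold corr
    rw [hV i t, hV j t, key i j t t, Real.mul_self_sqrt hVpos.le]
    simp
  · intro i j hij t s ht hs hst
    unfold corr
    rw [hV i t, hV j s, key i j t s, if_neg fun h => hst h.symm, add_zero]
    norm_cast
end

section
/- (Theorem 1, equation (17)) In the first-order polynomial DLM with n = 1 and T = 2, the predictive conditional variance of y01 given both observations satisfies Var(y01|y11, y12) = M1/Δ, where Δ = (σβ² + σδ² + σε²)(σβ² + 2σδ² + σε²) − (σβ² + σδ²)² and M1 = (σβ² + 2σδ² + σε²)·{(σβ² + σδ² + σε²)² − (σβ² + σδ² + σε²·exp(−d01/λ))²} − 2(σβ² + σδ²)²·(σε² − σε²·exp(−d01/λ)). -/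
/-- Theorem 1, eq. (17): `Var(y01|y11, y12) = M1/Δ` with
`Δ = (σβ²+σδ²+σε²)(σβ²+2σδ²+σε²) − (σβ²+σδ²)²` and
`M1 = (σβ²+2σδ²+σε²)·{(σβ²+σδ²+σε²)² − (σβ²+σδ²+σε²·exp(−d01/λ))²}
      − 2(σβ²+σδ²)²·(σε² − σε²·exp(−d01/λ))`. -/
theorem pred_var_y01_given_y11_y12 (sb2 sd2 se2 lam d01 : ℝ)
    (hb : 0 < sb2) (hd : 0 < sd2) (he : 0 < se2) (hl : 0 < lam) (h01 : 0 ≤ d01) :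
    let ρ := Real.exp (-d01 / lam)
    let a := sb2 + sd2
    let v1 := sb2 + sd2 + se2
    let v2 := sb2 + 2 * sd2 + se2
    let c1 := sb2 + sd2 + se2 * ρ
    let c2 := sb2 + 2 * sd2 + se2 * ρ
    let Δ := v1 * v2 - a ^ 2
    let var01_1 := v1 - c1 ^ 2 / v1                                -- Var(y01 | y11)
    let var02_1 := v2 - c2 ^ 2 / v2                                -- Var(y02 | y12)
    let var01_2 := v1 - (c1 ^ 2 * v2 - 2 * c1 * a ^ 2 + a ^ 2 * v1) / Δ  -- Var(y01 | y11, y12)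
    let var02_2 := v2 - (a ^ 2 * v2 - 2 * a ^ 2 * c2 + c2 ^ 2 * v1) / Δ  -- Var(y02 | y11, y12)
    let M1 := v2 * (v1 ^ 2 - c1 ^ 2) - 2 * a ^ 2 * (se2 - se2 * ρ)
    var01_2 = M1 / Δ := by
  intro ρ a v1 v2 c1 c2 Δ var01_1 var02_1 var01_2 var02_2 M1
  have hΔ : Δ ≠ 0 := by
    have : 0 < Δ := by simp only [Δ, v1, v2, a]; nlinarith
    linarith
  show v1 - (c1 ^ 2 * v2 - 2 * c1 * a ^ 2 + a ^ 2 * v1) / Δ = M1 / Δ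
  field_simp
  simp only [M1, Δ, v1, v2, a, c1]
  ring
end

section
/- (Theorem 1, equation (18)) In the first-order polynomial DLM with n = 1 and T = 2, the predictive conditional variance of y02 given both observations satisfies Var(y02|y11, y12) = M2/Δ, where Δ = (σβ² + σδ² + σε²)(σβ² + 2σδ² + σε²) − (σβ² + σδ²)² and M2 = (σβ² + σδ² + σε²)·{(σβ² + 2σδ² + σε²)² − (σβ² + 2σδ² + σε²·exp(−d01/λ))²} − 2(σβ² + σδ²)²·(σε² − σε²·exp(−d01/λ)). -/
/-- Theorem 1, eq. (18): `Var(y02|y11, y12) = M2/Δ` with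
`Δ = (σβ²+σδ²+σε²)(σβ²+2σδ²+σε²) − (σβ²+σδ²)²` and
`M2 = (σβ²+σδ²+σε²)·{(σβ²+2σδ²+σε²)² − (σβ²+2σδ²+σε²·exp(−d01/λ))²}
      − 2(σβ²+σδ²)²·(σε² − σε²·exp(−d01/λ))`. -/
theorem pred_var_y02_given_y11_y12 (sb2 sd2 se2 lam d01 : ℝ)
    (hb : 0 < sb2) (hd : 0 < sd2) (he : 0 < se2) (hl : 0 < lam) (h01 : 0 ≤ d01) :
    let ρ := Real.exp (-d01 / lam)
    let a := sb2 + sd2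
    let v1 := sb2 + sd2 + se2
    let v2 := sb2 + 2 * sd2 + se2
    let c1 := sb2 + sd2 + se2 * ρ
    let c2 := sb2 + 2 * sd2 + se2 * ρ
    let Δ := v1 * v2 - a ^ 2
    let var01_1 := v1 - c1 ^ 2 / v1                                -- Var(y01 | y11)
    let var02_1 := v2 - c2 ^ 2 / v2                                -- Var(y02 | y12)
    let var01_2 := v1 - (c1 ^ 2 * v2 - 2 * c1 * a ^ 2 + a ^ 2 * v1) / Δ  -- Var(y01 | y11, y12)
    let var02_2 := v2 - (a ^ 2 * v2 - 2 * a ^ 2 * c2 + c2 ^ 2 * v1) / Δ  -- Var(y02 | y11, y12)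
    let M2 := v1 * (v2 ^ 2 - c2 ^ 2) - 2 * a ^ 2 * (se2 - se2 * ρ)
    var02_2 = M2 / Δ := by
  intro ρ a v1 v2 c1 c2 Δ var01_1 var02_1 var01_2 var02_2 M2
  have hΔ : Δ ≠ 0 := by
    have : 0 < Δ := by
      have : Δ = se2 * (sb2 + 2 * sd2 + se2) + (sb2 + sd2) * (sd2 + se2) := by
        simp only [Δ, v1, v2, a]; ring
      rw [this]; positivity
    linarith
  show v2 - (a ^ 2 * v2 - 2 * a ^ 2 * c2 + c2 ^ 2 * v1) / Δ = M2 / Δ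
  rw [eq_div_iff hΔ, sub_mul, div_mul_cancel₀ _ hΔ]
  simp only [M2, Δ, v1, v2, a, c2]
  ring
end

section
/- (Theorem 2, equation (21)) In the first-order polynomial DLM with n = 1 and T = 2, conditioning on more data does not increase the predictive variance of y01, and the gap is exactly Var(y01|y11) − Var(y01|y11, y12) = σε⁴·(σβ² + σδ²)²·(1 − exp(−d01/λ))² / (Δ·(σβ² + σδ² + σε²)) ≥ 0. -/
/-- Theorem 2, eq. (21):
`Var(y01|y11) − Var(y01|y11,y12) = σε⁴·(σβ²+σδ²)²·(1−exp(−d01/λ))² / (Δ·(σβ²+σδ²+σε²)) ≥ 0`. -/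
theorem pred_var_gap_y01 (sb2 sd2 se2 lam d01 : ℝ)
    (hb : 0 < sb2) (hd : 0 < sd2) (he : 0 < se2) (hl : 0 < lam) (h01 : 0 ≤ d01) :
    let ρ := Real.exp (-d01 / lam)
    let a := sb2 + sd2
    let v1 := sb2 + sd2 + se2
    let v2 := sb2 + 2 * sd2 + se2
    let c1 := sb2 + sd2 + se2 * ρ
    let c2 := sb2 + 2 * sd2 + se2 * ρ
    let Δ := v1 * v2 - a ^ 2
    let var01_1 := v1 - c1 ^ 2 / v1                                -- Var(y01 | y11)
    let var02_1 := v2 - c2 ^ 2 / v2                                -- Var(y02 | y12)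
    let var01_2 := v1 - (c1 ^ 2 * v2 - 2 * c1 * a ^ 2 + a ^ 2 * v1) / Δ  -- Var(y01 | y11, y12)
    let var02_2 := v2 - (a ^ 2 * v2 - 2 * a ^ 2 * c2 + c2 ^ 2 * v1) / Δ  -- Var(y02 | y11, y12)
    var01_1 - var01_2 = se2 ^ 2 * a ^ 2 * (1 - ρ) ^ 2 / (Δ * v1) ∧
      0 ≤ se2 ^ 2 * a ^ 2 * (1 - ρ) ^ 2 / (Δ * v1) := by
  intro ρ a v1 v2 c1 c2 Δ var01_1 var02_1 var01_2 var02_2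
  have hv1 : (0:ℝ) < v1 := by positivity
  have hΔ : (0:ℝ) < Δ := by
    have : Δ = sd2 * (sb2 + sd2) + se2 * (sb2 + 2 * sd2 + se2) + se2 * (sb2 + sd2) := by
      simp only [Δ, v1, v2, a]; ring
    rw [this]; positivity
  constructor
  · simp only [var01_1, var01_2, var02_1, var02_2]
    field_simp
    ring
  · positivity
end

section
/- (Theorem 2, equation (23)) In the first-order polynomial DLM with n = 1 and T = 2, conditional on all the data the predictive variance increases with the time of the predictand: Var(y02|y11, y12) − Var(y01|y11, y12) = σε⁴·σδ²·(1 − exp(−d01/λ))² / Δ ≥ 0. -/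
/-- Theorem 2, eq. (23): conditional on all the data, the predictive variance
increases with the time of the predictand:
`Var(y02|y11,y12) − Var(y01|y11,y12) = σε⁴·σδ²·(1−exp(−d01/λ))²/Δ ≥ 0`. -/
theorem pred_var_increase_full_data (sb2 sd2 se2 lam d01 : ℝ)
    (hb : 0 < sb2) (hd : 0 < sd2) (he : 0 < se2) (hl : 0 < lam) (h01 : 0 ≤ d01) :
    let ρ := Real.exp (-d01 / lam)
    let a := sb2 + sd2
    let v1 := sb2 + sd2 + se2
    let v2 := sb2 + 2 * sd2 + se2
    let c1 := sb2 + sd2 + se2 * ρ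
    let c2 := sb2 + 2 * sd2 + se2 * ρ
    let Δ := v1 * v2 - a ^ 2
    let var01_1 := v1 - c1 ^ 2 / v1                                -- Var(y01 | y11)
    let var02_1 := v2 - c2 ^ 2 / v2                                -- Var(y02 | y12)
    let var01_2 := v1 - (c1 ^ 2 * v2 - 2 * c1 * a ^ 2 + a ^ 2 * v1) / Δ  -- Var(y01 | y11, y12)
    let var02_2 := v2 - (a ^ 2 * v2 - 2 * a ^ 2 * c2 + c2 ^ 2 * v1) / Δ  -- Var(y02 | y11, y12)
    var02_2 - var01_2 = se2 ^ 2 * sd2 * (1 - ρ) ^ 2 / Δ ∧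
      0 ≤ se2 ^ 2 * sd2 * (1 - ρ) ^ 2 / Δ := by
  intro ρ a v1 v2 c1 c2 Δ var01_1 var02_1 var01_2 var02_2
  have hρ : 0 < ρ := Real.exp_pos _
  have hΔ : 0 < Δ := by simp only [Δ, v1, v2, a]; nlinarith
  constructor
  · simp only [var02_2, var01_2, v1, v2, c1, c2, a, Δ]
    have hΔ' : (sb2 + sd2 + se2) * (sb2 + 2 * sd2 + se2) - (sb2 + sd2) ^ 2 ≠ 0 := hΔ.ne'
    rw [eq_div_iff hΔ', sub_mul, sub_mul, sub_mul, div_mul_cancel₀ _ hΔ', div_mul_cancel₀ _ hΔ']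
    ring
  · positivity
end

section
/- (Theorem 2, equation (24)) In the first-order polynomial DLM with n = 1 and T = 2, the one-observation predictive variance increases with the time of the predictand: Var(y02|y12) − Var(y01|y11) = σε⁴·σδ²·(1 − exp(−d01/λ))² / ((σβ² + σδ² + σε²)·(σβ² + 2σδ² + σε²)) ≥ 0. -/
/-- Theorem 2, eq. (24): the one-observation predictive variance increases with
the time of the predictand:
`Var(y02|y12) − Var(y01|y11) = σε⁴·σδ²·(1−exp(−d01/λ))²/((σβ²+σδ²+σε²)(σβ²+2σδ²+σε²)) ≥ 0`. -/
theorem pred_var_increase_one_obs (sb2 sd2 se2 lam d01 : ℝ)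
    (hb : 0 < sb2) (hd : 0 < sd2) (he : 0 < se2) (hl : 0 < lam) (h01 : 0 ≤ d01) :
    let ρ := Real.exp (-d01 / lam)
    let a := sb2 + sd2
    let v1 := sb2 + sd2 + se2
    let v2 := sb2 + 2 * sd2 + se2
    let c1 := sb2 + sd2 + se2 * ρ
    let c2 := sb2 + 2 * sd2 + se2 * ρ
    let Δ := v1 * v2 - a ^ 2
    let var01_1 := v1 - c1 ^ 2 / v1                                -- Var(y01 | y11)
    let var02_1 := v2 - c2 ^ 2 / v2                                -- Var(y02 | y12)
    let var01_2 := v1 - (c1 ^ 2 * v2 - 2 * c1 * a ^ 2 + a ^ 2 * v1) / Δ  -- Var(y01 | y11, y12)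
    let var02_2 := v2 - (a ^ 2 * v2 - 2 * a ^ 2 * c2 + c2 ^ 2 * v1) / Δ  -- Var(y02 | y11, y12)
    var02_1 - var01_1 = se2 ^ 2 * sd2 * (1 - ρ) ^ 2 / (v1 * v2) ∧
      0 ≤ se2 ^ 2 * sd2 * (1 - ρ) ^ 2 / (v1 * v2) := by
  intro ρ a v1 v2 c1 c2 Δ var01_1 var02_1 var01_2 var02_2
  have hv1 : (0:ℝ) < v1 := by positivity
  have hv2 : (0:ℝ) < v2 := by positivity
  constructor
  · show v2 - c2 ^ 2 / v2 - (v1 - c1 ^ 2 / v1) = se2 ^ 2 * sd2 * (1 - ρ) ^ 2 / (v1 * v2)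
    field_simp
    ring
  · positivity
end

section
/- (Theorem 2, inequality (25)) In the first-order polynomial DLM with n = 1 and T = 2, the reduction in predictive variance from the extra observation is at least as large for the earlier predictand: Var(y01|y11) − Var(y01|y11, y12) ≥ Var(y02|y12) − Var(y02|y11, y12). -/
/-- Theorem 2, ineq. (25): the reduction in predictive variance from the extra
observation is at least as large for the earlier predictand:
`Var(y01|y11) − Var(y01|y11,y12) ≥ Var(y02|y12) − Var(y02|y11,y12)`. -/
theorem pred_var_reduction_comparison (sb2 sd2 se2 lam d01 : ℝ)
    (hb : 0 < sb2) (hd : 0 < sd2) (he : 0 < se2) (hl : 0 < lam) (h01 : 0 ≤ d01) :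
    let ρ := Real.exp (-d01 / lam)
    let a := sb2 + sd2
    let v1 := sb2 + sd2 + se2
    let v2 := sb2 + 2 * sd2 + se2
    let c1 := sb2 + sd2 + se2 * ρ
    let c2 := sb2 + 2 * sd2 + se2 * ρ
    let Δ := v1 * v2 - a ^ 2
    let var01_1 := v1 - c1 ^ 2 / v1                                -- Var(y01 | y11)
    let var02_1 := v2 - c2 ^ 2 / v2                                -- Var(y02 | y12)
    let var01_2 := v1 - (c1 ^ 2 * v2 - 2 * c1 * a ^ 2 + a ^ 2 * v1) / Δ  -- Var(y01 | y11, y12)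
    let var02_2 := v2 - (a ^ 2 * v2 - 2 * a ^ 2 * c2 + c2 ^ 2 * v1) / Δ  -- Var(y02 | y11, y12)
    var01_1 - var01_2 ≥ var02_1 - var02_2 := by
  intro ρ a v1 v2 c1 c2 Δ var01_1 var02_1 var01_2 var02_2
  have hρ : 0 < ρ := Real.exp_pos _
  have hv1 : 0 < v1 := by simp only [v1]; linarith
  have hv2 : 0 < v2 := by simp only [v2]; linarith
  have hΔ : 0 < Δ := by
    simp only [Δ, v1, v2, a]; nlinarith [mul_pos hb hd, mul_pos hd he, mul_pos he he]
  have key : var01_1 - var01_2 - (var02_1 - var02_2)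
      = sd2 * se2 ^ 2 * ((1 - ρ) * (sb2 + sd2)) ^ 2 / (Δ * v1 * v2) := by
    have h1 : Δ ≠ 0 := hΔ.ne'
    have h2 : v1 ≠ 0 := hv1.ne'
    have h3 : v2 ≠ 0 := hv2.ne'
    simp only [var01_1, var01_2, var02_1, var02_2, c1, c2]
    field_simp
    simp only [Δ, a, v1, v2]
    ring
  have hnum : 0 ≤ sd2 * se2 ^ 2 * ((1 - ρ) * (sb2 + sd2)) ^ 2 :=
    mul_nonneg (mul_nonneg hd.le (sq_nonneg _)) (sq_nonneg _)
  have hden : 0 < Δ * v1 * v2 := mul_pos (mul_pos hΔ hv1) hv2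
  have : 0 ≤ var01_1 - var01_2 - (var02_1 - var02_2) := by
    rw [key]; positivity
  linarith
end

section
/- (Theorem 2, inequality (26)) In the first-order polynomial DLM with n = 1 and T = 2, the across-time gap in predictive variances is at least as large when conditioning on all the data: Var(y02|y12) − Var(y01|y11) ≤ Var(y02|y11, y12) − Var(y01|y11, y12). -/
/-- Theorem 2, ineq. (26): the across-time gap in predictive variances is at
least as large when conditioning on all the data:
`Var(y02|y12) − Var(y01|y11) ≤ Var(y02|y11,y12) − Var(y01|y11,y12)`. -/
theorem pred_var_gap_comparison (sb2 sd2 se2 lam d01 : ℝ)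
    (hb : 0 < sb2) (hd : 0 < sd2) (he : 0 < se2) (hl : 0 < lam) (h01 : 0 ≤ d01) :
    let ρ := Real.exp (-d01 / lam)
    let a := sb2 + sd2
    let v1 := sb2 + sd2 + se2
    let v2 := sb2 + 2 * sd2 + se2
    let c1 := sb2 + sd2 + se2 * ρ
    let c2 := sb2 + 2 * sd2 + se2 * ρ
    let Δ := v1 * v2 - a ^ 2
    let var01_1 := v1 - c1 ^ 2 / v1                                -- Var(y01 | y11)
    let var02_1 := v2 - c2 ^ 2 / v2                                -- Var(y02 | y12)
    let var01_2 := v1 - (c1 ^ 2 * v2 - 2 * c1 * a ^ 2 + a ^ 2 * v1) / Δ  -- Var(y01 | y11, y12)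
    let var02_2 := v2 - (a ^ 2 * v2 - 2 * a ^ 2 * c2 + c2 ^ 2 * v1) / Δ  -- Var(y02 | y11, y12)
    var02_1 - var01_1 ≤ var02_2 - var01_2 := by
  simp only
  set ρ := Real.exp (-d01 / lam) with hρdef
  have hρ0 : 0 < ρ := Real.exp_pos _
  have hv1 : (0:ℝ) < sb2 + sd2 + se2 := by linarith
  have hv2 : (0:ℝ) < sb2 + 2 * sd2 + se2 := by linarith
  have hΔ : (0:ℝ) < (sb2 + sd2 + se2) * (sb2 + 2 * sd2 + se2) - (sb2 + sd2) ^ 2 := by nlinarith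
  have key : 0 ≤ sd2 * ((sb2 + sd2 + se2) - (sb2 + sd2 + se2 * ρ)) ^ 2 := by positivity
  set M : ℝ := (sb2 + sd2 + se2 * ρ) ^ 2 * (sb2 + 2 * sd2 + se2)
      - (sb2 + 2 * sd2 + se2 * ρ) ^ 2 * (sb2 + sd2 + se2) with hM
  have eL : sb2 + 2 * sd2 + se2 - (sb2 + 2 * sd2 + se2 * ρ) ^ 2 / (sb2 + 2 * sd2 + se2) -
      (sb2 + sd2 + se2 - (sb2 + sd2 + se2 * ρ) ^ 2 / (sb2 + sd2 + se2))
      = sd2 + M / ((sb2 + sd2 + se2) * (sb2 + 2 * sd2 + se2)) := by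
    rw [hM]; field_simp; ring
  have eR : sb2 + 2 * sd2 + se2 -
        ((sb2 + sd2) ^ 2 * (sb2 + 2 * sd2 + se2) - 2 * (sb2 + sd2) ^ 2 * (sb2 + 2 * sd2 + se2 * ρ) +
            (sb2 + 2 * sd2 + se2 * ρ) ^ 2 * (sb2 + sd2 + se2)) /
          ((sb2 + sd2 + se2) * (sb2 + 2 * sd2 + se2) - (sb2 + sd2) ^ 2) -
      (sb2 + sd2 + se2 -
        ((sb2 + sd2 + se2 * ρ) ^ 2 * (sb2 + 2 * sd2 + se2) - 2 * (sb2 + sd2 + se2 * ρ) * (sb2 + sd2) ^ 2 +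
            (sb2 + sd2) ^ 2 * (sb2 + sd2 + se2)) /
          ((sb2 + sd2 + se2) * (sb2 + 2 * sd2 + se2) - (sb2 + sd2) ^ 2))
      = sd2 + (M + (sb2 + sd2) ^ 2 * sd2) /
          ((sb2 + sd2 + se2) * (sb2 + 2 * sd2 + se2) - (sb2 + sd2) ^ 2) := by
    rw [hM]; field_simp; ring
  rw [eL, eR]
  have main : M / ((sb2 + sd2 + se2) * (sb2 + 2 * sd2 + se2)) ≤
      (M + (sb2 + sd2) ^ 2 * sd2) /
        ((sb2 + sd2 + se2) * (sb2 + 2 * sd2 + se2) - (sb2 + sd2) ^ 2) := by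
    rw [div_le_div_iff₀ (by positivity) hΔ, hM]
    nlinarith [mul_nonneg (sq_nonneg (sb2 + sd2)) key]
  linarith [main]
end

section
/- (Corollary 2) In the first-order polynomial DLM with n = 1 and T = 2 and with d01 > 0, let Var*(y02|y12) denote the predictive variance obtained by applying the DLM to the data at time T = 2 only, which equals Var(y01|y11) = (v1² − c1²)/v1, and let Var(y02|y11, y12) = M2/Δ be the predictive variance based on all the data as in Theorem 1. Then Var*(y02|y12) < Var(y02|y11, y12) if and only if σε² > σβ²·(1 + σβ²/σδ²). -/
/-- Corollary 2: in the first-order polynomial DLM with n = 1, T = 2 and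
`d01 > 0`, let `Var*(y02|y12) = Var(y01|y11) = (v1² − c1²)/v1` be the predictive variance from
applying the DLM to the time-2 data only, and let `Var(y02|y11, y12) = M2/Δ` be the predictive
variance based on all the data. Then
`Var*(y02|y12) < Var(y02|y11, y12) ↔ σε² > σβ²·(1 + σβ²/σδ²)`. -/
theorem pred_var_paradox (sb2 sd2 se2 lam d01 : ℝ)
    (hb : 0 < sb2) (hd : 0 < sd2) (he : 0 < se2) (hl : 0 < lam) (h01 : 0 < d01) :
    let ρ := Real.exp (-d01 / lam)
    let a := sb2 + sd2
    let v1 := sb2 + sd2 + se2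
    let v2 := sb2 + 2 * sd2 + se2
    let c1 := sb2 + sd2 + se2 * ρ
    let c2 := sb2 + 2 * sd2 + se2 * ρ
    let Δ := v1 * v2 - a ^ 2
    let M2 := v1 * (v2 ^ 2 - c2 ^ 2) - 2 * a ^ 2 * se2 * (1 - ρ)
    ((v1 ^ 2 - c1 ^ 2) / v1 < M2 / Δ ↔ se2 > sb2 * (1 + sb2 / sd2)) := by
  intro ρ a v1 v2 c1 c2 Δ M2
  have hρ0 : 0 < ρ := Real.exp_pos _
  have hρ1 : ρ < 1 := by
    have : -d01 / lam < 0 := div_neg_of_neg_of_pos (by linarith) hl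
    exact Real.exp_lt_one_iff.mpr this
  have hv1 : 0 < v1 := by simp only [v1]; linarith
  have hΔ : 0 < Δ := by
    simp only [Δ, v1, v2, a]; nlinarith
  rw [div_lt_div_iff₀ hv1 hΔ]
  have key : M2 * v1 - (v1 ^ 2 - c1 ^ 2) * Δ
      = se2 ^ 2 * (1 - ρ) ^ 2 * (sd2 * se2 - sb2 * sd2 - sb2 ^ 2) := by
    simp only [M2, v1, v2, c1, c2, Δ, a]; ring
  have h1ρ : 0 < 1 - ρ := by linarith
  have hpos : 0 < se2 ^ 2 * (1 - ρ) ^ 2 := by positivity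
  have hrhs : (se2 > sb2 * (1 + sb2 / sd2)) ↔ 0 < sd2 * se2 - sb2 * sd2 - sb2 ^ 2 := by
    rw [gt_iff_lt, ← sub_pos]
    have : se2 - sb2 * (1 + sb2 / sd2) = (sd2 * se2 - sb2 * sd2 - sb2 ^ 2) / sd2 := by
      field_simp; ring
    rw [this, div_pos_iff]
    constructor
    · rintro (⟨h, _⟩ | ⟨_, h⟩) <;> linarith
    · intro h; exact Or.inl ⟨h, hd⟩
  rw [hrhs]
  constructor
  · intro h
    nlinarith [key]
  · intro h
    nlinarith [mul_pos hpos h, key]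
end
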